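/- Let μ_t^k ∈ ℝ for t ∈ {1,…,T₀,T} and k ∈ {1,…,K}, and let ν₁,…,ν_{T₀} ∈ ℝ with ∑_{t=1}^{T₀} ν_t = 1 satisfy: for all k ∈ {2,…,K}, μ_T^1 − μ_T^k = ∑_{t=1}^{T₀} ν_t (μ_t^1 − μ_t^k). Then for any ω₂,…,ω_K ∈ ℝ with ∑_{k=2}^K ω_k = 1, μ_T^1 = ∑_{t=1}^{T₀} ν_t μ_t^1 + ∑_{k=2}^K ω_k μ_T^k − ∑_{t=1}^{T₀} ∑_{k=2}^K ν_t ω_k μ_t^k. -/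

import Mathlib

/-- Double robustness, time-weight direction: if the time weights ν express each
post-treatment selection bias as the ν-weighted combination of pre-treatment biases,
then the two-way weighted DID formula recovers μ_T^1 for arbitrary affine unit weights ω. -/
theorem stmt11 (T₀ T K : ℕ) (μ : ℕ → ℕ → ℝ)
    (ν : ℕ → ℝ) (hν : ∑ t ∈ Finset.Icc 1 T₀, ν t = 1)
    (hval : ∀ k ∈ Finset.Icc 2 K,
      μ T 1 - μ T k = ∑ t ∈ Finset.Icc 1 T₀, ν t * (μ t 1 - μ t k))
    (ω : ℕ → ℝ) (hω : ∑ k ∈ Finset.Icc 2 K, ω k = 1) :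
    μ T 1 = (∑ t ∈ Finset.Icc 1 T₀, ν t * μ t 1)
      + (∑ k ∈ Finset.Icc 2 K, ω k * μ T k)
      - ∑ t ∈ Finset.Icc 1 T₀, ∑ k ∈ Finset.Icc 2 K, ν t * ω k * μ t k := by
  have key : ∑ k ∈ Finset.Icc 2 K, ω k * (μ T 1 - μ T k)
      = ∑ k ∈ Finset.Icc 2 K, ω k * ∑ t ∈ Finset.Icc 1 T₀, ν t * (μ t 1 - μ t k) := by
    exact Finset.sum_congr rfl fun k hk => by rw [hval k hk]
  have l1 : ∑ k ∈ Finset.Icc 2 K, ω k * (μ T 1 - μ T k)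
      = μ T 1 - ∑ k ∈ Finset.Icc 2 K, ω k * μ T k := by
    simp [mul_sub, Finset.sum_sub_distrib, ← Finset.sum_mul, hω]
  have r1 : ∑ k ∈ Finset.Icc 2 K, ω k * ∑ t ∈ Finset.Icc 1 T₀, ν t * (μ t 1 - μ t k)
      = (∑ t ∈ Finset.Icc 1 T₀, ν t * μ t 1)
        - ∑ t ∈ Finset.Icc 1 T₀, ∑ k ∈ Finset.Icc 2 K, ν t * ω k * μ t k := by
    simp only [Finset.mul_sum]
    rw [Finset.sum_comm, ← Finset.sum_sub_distrib]
    refine Finset.sum_congr rfl fun t ht => ?_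
    have : ∑ k ∈ Finset.Icc 2 K, ω k * (ν t * (μ t 1 - μ t k))
        = ∑ k ∈ Finset.Icc 2 K, (ω k * (ν t * μ t 1) - ν t * ω k * μ t k) :=
      Finset.sum_congr rfl fun k hk => by ring
    rw [this, Finset.sum_sub_distrib, ← Finset.sum_mul, hω, one_mul]
  have := key
  rw [l1, r1] at this
  linarith
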